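/- Let (c_n)_{n∈ℕ₀} ∈ ℓ²(ℕ₀) and let (e_n)_{n∈ℕ₀} be a sequence in L²([0,π]) of the form e_n(x) = cos((2n + t/π)x) + r_n(x)/max(n,1) with ∑_n ‖r_n‖²_{L²} ≤ C₀, for a fixed t ∈ [0,π]. Then the series ∑_n c_n e_n converges in L²([0,π]) and ‖∑_n c_n e_n‖²_{L²([0,π])} ≤ C ∑_n |c_n|², with C depending only on C₀ (not on t or (c_n)). -/

import Mathlib

open MeasureTheory Filter Complex

noncomputable section
namespace PCB

abbrev μπ : Measure ℝ := volume.restrict (Set.Icc (0:ℝ) Real.pi)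

instance : IsFiniteMeasure μπ :=
  ⟨by rw [Measure.restrict_apply_univ]; exact measure_Icc_lt_top⟩

lemma integral_sq_abs {f : ℝ → ℂ} (hf : MemLp f 2 μπ) :
    ∫ x in Set.Icc (0:ℝ) Real.pi, ‖f x‖ ^ 2 = ‖hf.toLp f‖ ^ 2 := by
  set F := hf.toLp f with hF
  have h1 := inner_self_eq_norm_sq (𝕜 := ℂ) F
  rw [← h1, L2.inner_def, ← integral_re (L2.integrable_inner F F)]
  refine integral_congr_ae ?_
  filter_upwards [hf.coeFn_toLp] with x hx
  rw [← hF] at hx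
  simp only [RCLike.inner_apply, hx]
  rw [Complex.mul_conj]
  simp [Complex.normSq_eq_norm_sq, ← Complex.ofReal_pow]

lemma toLp_finset_sum {ι : Type*} (F : Finset ι) (f : ι → ℝ → ℂ) (hf : ∀ i, MemLp (f i) 2 μπ) :
    ∀ hs : MemLp (fun x => ∑ i ∈ F, f i x) 2 μπ,
    hs.toLp _ = ∑ i ∈ F, (hf i).toLp (f i) := by
  classical
  induction F using Finset.induction_on with
  | empty =>
    intro hs
    simp only [Finset.sum_empty]
    exact MemLp.toLp_zero hs
  | @insert a s ha ih =>
    intro hs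
    have hsum : MemLp (fun x => ∑ i ∈ s, f i x) 2 μπ :=
      memLp_finset_sum s (fun i _ => hf i)
    have e1 : hs.toLp _ = ((hf a).add hsum).toLp (f a + fun x => ∑ i ∈ s, f i x) :=
      (MemLp.toLp_eq_toLp_iff _ _).mpr
        (by filter_upwards with x; simp [Finset.sum_insert ha])
    rw [e1, MemLp.toLp_add, ih hsum, Finset.sum_insert ha]
    exact hsum

lemma memLp_of_bound {f : ℝ → ℂ} (hf : Continuous f) (b : ℝ) (hb : ∀ x, ‖f x‖ ≤ b) :
    MemLp f 2 μπ :=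
  MemLp.of_bound hf.aestronglyMeasurable b (Eventually.of_forall hb)

lemma integral_exp_int (k : ℤ) :
    (∫ x in Set.Icc (0:ℝ) Real.pi, Complex.exp (2 * k * x * Complex.I)) =
      if k = 0 then (Real.pi : ℂ) else 0 := by
  rw [MeasureTheory.integral_Icc_eq_integral_Ioc,
    ← intervalIntegral.integral_of_le Real.pi_pos.le]
  rcases eq_or_ne k 0 with hk | hk
  · simp [hk]
  · rw [if_neg hk]
    have hc : (2 * (k:ℂ) * Complex.I) ≠ 0 :=
      mul_ne_zero (mul_ne_zero two_ne_zero (Int.cast_ne_zero.mpr hk)) Complex.I_ne_zero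
    have h1 : ∀ x : ℝ, Complex.exp (2 * k * x * Complex.I)
        = Complex.exp ((2 * (k:ℂ) * Complex.I) * x) := by
      intro x; ring_nf
    simp_rw [h1]
    rw [integral_exp_mul_complex hc]
    have h2 : (2 * (k:ℂ) * Complex.I) * (Real.pi : ℂ) = k * (2 * Real.pi * Complex.I) := by ring
    rw [h2, Complex.exp_int_mul_two_pi_mul_I]
    simp

def pfn (k : ℤ) : ℝ → ℂ := fun x => Complex.exp (2 * k * x * Complex.I)

lemma pfn_norm (k : ℤ) (x : ℝ) : ‖pfn k x‖ = 1 := by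
  have : (2 * (k:ℂ) * x * Complex.I) = ((2 * k * x : ℝ) : ℂ) * Complex.I := by push_cast; ring
  rw [pfn, this, Complex.norm_exp_ofReal_mul_I]

lemma pfn_memLp (k : ℤ) : MemLp (pfn k) 2 μπ :=
  memLp_of_bound (by unfold pfn; continuity) 1 (fun x => (pfn_norm k x).le)

def W (k : ℤ) : Lp ℂ 2 μπ := (pfn_memLp k).toLp _

lemma inner_W (k l : ℤ) : (@inner ℂ _ _ (W k) (W l)) = if k = l then (Real.pi : ℂ) else 0 := by
  rw [L2.inner_def]
  have : ∫ a, (@inner ℂ _ _ ((W k) a) ((W l) a)) ∂μπ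
      = ∫ x in Set.Icc (0:ℝ) Real.pi, Complex.exp (2 * ((l - k : ℤ) : ℂ) * x * Complex.I) := by
    refine integral_congr_ae ?_
    filter_upwards [(pfn_memLp k).coeFn_toLp, (pfn_memLp l).coeFn_toLp] with x h1 h2
    rw [show (W k) x = pfn k x from h1, show (W l) x = pfn l x from h2]
    simp only [RCLike.inner_apply]
    rw [pfn, pfn, ← Complex.exp_conj]
    have h3 : (2 * (k:ℂ) * (x:ℂ) * Complex.I) = ((2 * k * x : ℝ) : ℂ) * Complex.I := by
      push_cast; ring
    rw [h3, map_mul, Complex.conj_ofReal, Complex.conj_I, ← Complex.exp_add]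
    congr 1
    push_cast
    ring
  rw [this, integral_exp_int (l - k)]
  simp [sub_eq_zero, eq_comm]

def u (k : ℤ) : Lp ℂ 2 μπ := (((Real.sqrt Real.pi : ℝ) : ℂ))⁻¹ • W k

lemma sqrtpi_ne : ((Real.sqrt Real.pi : ℝ) : ℂ) ≠ 0 := by
  norm_cast
  exact ne_of_gt (Real.sqrt_pos.mpr Real.pi_pos)

lemma orthonormal_u : Orthonormal ℂ u := by
  rw [orthonormal_iff_ite]
  intro i j
  rw [u, u, inner_smul_left, inner_smul_right, inner_W]
  rcases eq_or_ne i j with h | h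
  · rw [if_pos h, if_pos h, map_inv₀, Complex.conj_ofReal, ← mul_assoc, ← mul_inv]
    rw [show ((Real.sqrt Real.pi : ℝ) : ℂ) * (Real.sqrt Real.pi : ℝ)
        = ((Real.pi : ℝ) : ℂ) by norm_cast; exact Real.mul_self_sqrt Real.pi_pos.le]
    norm_cast
    exact inv_mul_cancel₀ (ne_of_gt Real.pi_pos)
  · rw [if_neg h, if_neg h, mul_zero, mul_zero]

lemma norm_sum_W {ι : Type*} (F : Finset ι) (d : ι → ℂ) (m : ι → ℤ)
    (hm : Function.Injective m) :
    ‖∑ n ∈ F, d n • W (m n)‖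
      = Real.sqrt Real.pi * Real.sqrt (∑ n ∈ F, ‖d n‖ ^ 2) := by
  have hW : ∀ k, W k = ((Real.sqrt Real.pi : ℝ) : ℂ) • u k :=
    fun k => (smul_inv_smul₀ sqrtpi_ne _).symm
  set l : ι → ℂ := fun n => ((Real.sqrt Real.pi : ℝ) : ℂ) * d n with hl
  have hsum : ∑ n ∈ F, d n • W (m n) = ∑ n ∈ F, l n • (u ∘ m) n := by
    refine Finset.sum_congr rfl fun n _ => ?_
    rw [hW, smul_smul, mul_comm]
    rfl
  have honc := orthonormal_u.comp m hm
  set S := ∑ n ∈ F, l n • (u ∘ m) n with hS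
  have hnormsq : ‖S‖ ^ 2 = Real.pi * ∑ n ∈ F, ‖d n‖ ^ 2 := by
    have h1 := inner_self_eq_norm_sq (𝕜 := ℂ) S
    rw [hS, honc.inner_sum l l F, map_sum] at h1
    rw [← h1, Finset.mul_sum]
    refine Finset.sum_congr rfl fun n _ => ?_
    rw [mul_comm ((starRingEnd ℂ) (l n)), Complex.mul_conj]
    have hns : Complex.normSq (l n) = Real.pi * ‖d n‖ ^ 2 := by
      rw [Complex.normSq_eq_norm_sq, hl]
      simp only [norm_mul, Complex.norm_real, Real.norm_eq_abs]
      rw [_root_.abs_of_nonneg (Real.sqrt_nonneg _), mul_pow, Real.sq_sqrt Real.pi_pos.le]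
    rw [hns]
    norm_cast
  have h2 : ‖S‖ = Real.sqrt (Real.pi * ∑ n ∈ F, ‖d n‖ ^ 2) := by
    rw [← hnormsq]
    exact (Real.sqrt_sq (norm_nonneg _)).symm
  rw [hsum, h2, Real.sqrt_mul Real.pi_pos.le]

lemma cos_decomp (s x : ℝ) (n : ℕ) :
    ((Real.cos ((2 * n + s) * x) : ℝ) : ℂ)
      = 2⁻¹ * (Complex.exp ((s : ℂ) * x * Complex.I) * pfn n x
        + Complex.exp (-((s : ℂ) * x) * Complex.I) * pfn (-(n : ℤ)) x) := by
  rw [Complex.ofReal_cos]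
  show (Complex.exp ((((2 * n + s) * x : ℝ) : ℂ) * Complex.I)
      + Complex.exp (-(((2 * n + s) * x : ℝ) : ℂ) * Complex.I)) / 2 = _
  have e1 : (((2 * n + s) * x : ℝ) : ℂ) * Complex.I
      = (s : ℂ) * x * Complex.I + 2 * ((n : ℤ) : ℂ) * x * Complex.I := by push_cast; ring
  have e2 : -(((2 * n + s) * x : ℝ) : ℂ) * Complex.I
      = -((s : ℂ) * x) * Complex.I + 2 * ((-(n : ℤ) : ℤ) : ℂ) * x * Complex.I := by
    push_cast; ring
  rw [e1, e2, Complex.exp_add, Complex.exp_add, pfn, pfn]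
  ring

lemma exp_unit_norm (s x : ℝ) : ‖Complex.exp ((s : ℂ) * x * Complex.I)‖ = 1 := by
  rw [show ((s:ℂ) * x * Complex.I) = ((s * x : ℝ) : ℂ) * Complex.I by push_cast; ring,
    Complex.norm_exp_ofReal_mul_I]

lemma exp_unit_norm' (s x : ℝ) : ‖Complex.exp (-((s : ℂ) * x) * Complex.I)‖ = 1 := by
  rw [show (-((s:ℂ) * x) * Complex.I) = ((-(s * x) : ℝ) : ℂ) * Complex.I by push_cast; ring,
    Complex.norm_exp_ofReal_mul_I]

lemma expsum_memLp (s : ℝ) (c : ℕ → ℂ) (F : Finset ℕ) (m : ℕ → ℤ) (e : ℝ → ℂ)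
    (he : Continuous e) (heb : ∀ x, ‖e x‖ = 1) :
    MemLp (fun x => e x * ∑ n ∈ F, c n * pfn (m n) x) 2 μπ := by
  refine memLp_of_bound ?_ (∑ n ∈ F, ‖c n‖) ?_
  · exact he.mul (continuous_finset_sum F fun n _ => by
      unfold pfn; exact continuous_const.mul (by continuity))
  · intro x
    rw [norm_mul, heb, one_mul]
    refine (norm_sum_le _ _).trans ?_
    refine Finset.sum_le_sum fun n _ => ?_
    rw [norm_mul, pfn_norm, mul_one]

lemma toLp_smul_sum (c : ℕ → ℂ) (F : Finset ℕ) (f : ℕ → ℝ → ℂ)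
    (hf : ∀ n, MemLp (f n) 2 μπ)
    (hs : MemLp (fun x => ∑ n ∈ F, c n * f n x) 2 μπ) :
    hs.toLp _ = ∑ n ∈ F, c n • (hf n).toLp (f n) := by
  have h1 : ∀ n : ℕ, MemLp (c n • f n) 2 μπ := fun n => (hf n).const_smul (c n)
  have h2 : hs.toLp _ = ∑ n ∈ F, (h1 n).toLp (c n • f n) := by
    refine Eq.trans ?_ (toLp_finset_sum F (fun n => c n • f n) h1 ?_)
    · rfl
  rw [h2]
  exact Finset.sum_congr rfl fun n _ => MemLp.toLp_const_smul (c n) (hf n)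

lemma cos_part_bound (s : ℝ) (c : ℕ → ℂ) (F : Finset ℕ)
    (hcf : ∀ n : ℕ, MemLp (fun x : ℝ => ((Real.cos ((2 * n + s) * x) : ℝ) : ℂ)) 2 μπ) :
    ‖∑ n ∈ F, c n • (hcf n).toLp _‖
      ≤ Real.sqrt Real.pi * Real.sqrt (∑ n ∈ F, ‖c n‖ ^ 2) := by
  classical
  set ep : ℝ → ℂ := fun x => Complex.exp ((s : ℂ) * x * Complex.I) with hep
  set em : ℝ → ℂ := fun x => Complex.exp (-((s : ℂ) * x) * Complex.I) with hem
  have hcep : Continuous ep := by rw [hep]; fun_prop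
  have hcem : Continuous em := by rw [hem]; fun_prop
  have hA : MemLp (fun x => ep x * ∑ n ∈ F, c n * pfn (n : ℤ) x) 2 μπ :=
    expsum_memLp s c F _ ep hcep (exp_unit_norm s)
  have hB : MemLp (fun x => em x * ∑ n ∈ F, c n * pfn (-(n : ℤ)) x) 2 μπ :=
    expsum_memLp s c F _ em hcem (exp_unit_norm' s)
  have hZ : MemLp (fun x => ∑ n ∈ F, c n * ((Real.cos ((2 * n + s) * x) : ℝ) : ℂ)) 2 μπ :=
    memLp_finset_sum F fun n _ => (hcf n).const_mul (c n)
  -- identify the sum of toLp's with toLp of the sum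
  have h1 : ∑ n ∈ F, c n • (hcf n).toLp _ = hZ.toLp _ :=
    (toLp_smul_sum c F _ hcf hZ).symm
  -- decompose
  have h2 : hZ.toLp _ = (2 : ℂ)⁻¹ • (hA.toLp _ + hB.toLp _) := by
    rw [← MemLp.toLp_add hA hB, ← MemLp.toLp_const_smul]
    refine (MemLp.toLp_eq_toLp_iff _ _).mpr (Eventually.of_forall fun x => ?_)
    show ∑ n ∈ F, c n * _ = (2:ℂ)⁻¹ * ((fun x => ep x * ∑ n ∈ F, c n * pfn (n:ℤ) x) x
      + (fun x => em x * ∑ n ∈ F, c n * pfn (-(n:ℤ)) x) x)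
    simp only [hep, hem]
    simp_rw [cos_decomp s]
    rw [Finset.mul_sum, Finset.mul_sum, ← Finset.sum_add_distrib, Finset.mul_sum]
    refine Finset.sum_congr rfl fun n _ => ?_
    ring
  have hP : MemLp (fun x => ∑ n ∈ F, c n * pfn (n : ℤ) x) 2 μπ :=
    memLp_finset_sum F fun n _ => (pfn_memLp _).const_mul (c n)
  have hQ : MemLp (fun x => ∑ n ∈ F, c n * pfn (-(n : ℤ)) x) 2 μπ :=
    memLp_finset_sum F fun n _ => (pfn_memLp _).const_mul (c n)
  have hnA : ‖hA.toLp _‖ = ‖hP.toLp _‖ := by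
    rw [Lp.norm_toLp, Lp.norm_toLp]
    congr 1
    refine eLpNorm_congr_norm_ae (Eventually.of_forall fun x => ?_)
    show ‖ep x * _‖ = _
    rw [norm_mul, hep, exp_unit_norm s, one_mul]
  have hnB : ‖hB.toLp _‖ = ‖hQ.toLp _‖ := by
    rw [Lp.norm_toLp, Lp.norm_toLp]
    congr 1
    refine eLpNorm_congr_norm_ae (Eventually.of_forall fun x => ?_)
    show ‖em x * _‖ = _
    rw [norm_mul, hem, exp_unit_norm' s, one_mul]
  have hPW : hP.toLp _ = ∑ n ∈ F, c n • W (n : ℤ) :=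
    toLp_smul_sum c F _ (fun n => pfn_memLp _) hP
  have hQW : hQ.toLp _ = ∑ n ∈ F, c n • W (-(n : ℤ)) :=
    toLp_smul_sum c F _ (fun n => pfn_memLp _) hQ
  have hPn : ‖hP.toLp _‖ = Real.sqrt Real.pi * Real.sqrt (∑ n ∈ F, ‖c n‖ ^ 2) := by
    rw [hPW]
    exact norm_sum_W F c (fun n => (n : ℤ)) (fun a b h => Int.ofNat.inj h)
  have hQn : ‖hQ.toLp _‖ = Real.sqrt Real.pi * Real.sqrt (∑ n ∈ F, ‖c n‖ ^ 2) := by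
    rw [hQW]
    exact norm_sum_W F c (fun n => -(n : ℤ)) fun a b h =>
      Int.ofNat.inj (neg_injective h)
  rw [h1, h2, norm_smul]
  have : ‖(2 : ℂ)⁻¹‖ = 2⁻¹ := by
    rw [norm_inv]; norm_num
  rw [this]
  calc 2⁻¹ * ‖hA.toLp _ + hB.toLp _‖ ≤ 2⁻¹ * (‖hA.toLp _‖ + ‖hB.toLp _‖) := by
        have := norm_add_le (hA.toLp _) (hB.toLp _)
        nlinarith [this]
    _ = Real.sqrt Real.pi * Real.sqrt (∑ n ∈ F, ‖c n‖ ^ 2) := by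
        rw [hnA, hnB, hPn, hQn]; ring

end PCB

open PCB in
/-- Let `(c_n) ∈ ℓ²(ℕ₀)` and `e_n(x) = cos((2n + t/π)x) + r_n(x)/max(n,1)` in
`L²([0,π])` with `∑ ‖r_n‖² ≤ C₀`, for fixed `t ∈ [0,π]`. Then `∑ c_n e_n`
converges in `L²([0,π])` and `‖∑ c_n e_n‖² ≤ C ∑ |c_n|²`, with `C` depending
only on `C₀` (not on `t` or `(c_n)`). -/
theorem perturbed_cosine_bessel_bound (C₀ : ℝ) (hC₀ : 0 ≤ C₀) :
    ∃ C : ℝ, 0 < C ∧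
      ∀ t : ℝ, t ∈ Set.Icc (0 : ℝ) Real.pi →
      ∀ (c : ℕ → ℂ) (r : ℕ → ℝ → ℂ),
        Summable (fun n => ‖c n‖ ^ 2) →
        (∀ n, MemLp (r n) 2 (volume.restrict (Set.Icc (0 : ℝ) Real.pi))) →
        Summable (fun n => ∫ x in Set.Icc (0 : ℝ) Real.pi,
          ‖r n x‖ ^ 2) →
        (∑' n, ∫ x in Set.Icc (0 : ℝ) Real.pi, ‖r n x‖ ^ 2) ≤ C₀ →
        ∃ g : ℝ → ℂ,
          MemLp g 2 (volume.restrict (Set.Icc (0 : ℝ) Real.pi)) ∧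
          Tendsto (fun N => ∫ x in Set.Icc (0 : ℝ) Real.pi,
              ‖(∑ n ∈ Finset.range N, c n *
                ((Real.cos ((2 * (n : ℝ) + t / Real.pi) * x) : ℂ)
                  + r n x / ((max n 1 : ℕ) : ℂ))) - g x‖ ^ 2)
            atTop (nhds 0) ∧
          (∫ x in Set.Icc (0 : ℝ) Real.pi, ‖g x‖ ^ 2) ≤
            C * ∑' n, ‖c n‖ ^ 2 := by
  classical
  have hπ : (0:ℝ) < Real.sqrt Real.pi := Real.sqrt_pos.mpr Real.pi_pos
  set K : ℝ := Real.sqrt Real.pi + Real.sqrt C₀ with hKdef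
  have hK0 : 0 < K := by positivity
  refine ⟨K ^ 2, by positivity, ?_⟩
  intro t ht c r hc hr hrs hrC
  set s : ℝ := t / Real.pi with hsdef
  -- cosine functions
  have hcf : ∀ n : ℕ, MemLp (fun x : ℝ => ((Real.cos ((2 * n + s) * x) : ℝ) : ℂ)) 2 μπ := by
    intro n
    refine memLp_of_bound (by continuity) 1 fun x => ?_
    rw [Complex.norm_real, Real.norm_eq_abs]
    exact Real.abs_cos_le_one _
  set CL : ℕ → Lp ℂ 2 μπ := fun n => (hcf n).toLp _ with hCLdef
  set dd : ℕ → ℂ := fun n => ((max n 1 : ℕ) : ℂ) with hdd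
  have hdd1 : ∀ n, (1:ℝ) ≤ ‖dd n‖ := by
    intro n
    rw [hdd]
    simp only [Complex.norm_natCast]
    exact_mod_cast le_max_right n 1
  set RL : ℕ → Lp ℂ 2 μπ := fun n => (dd n)⁻¹ • (hr n).toLp (r n) with hRLdef
  set EL : ℕ → Lp ℂ 2 μπ := fun n => CL n + RL n with hELdef
  -- the statement's summand functions
  set ef : ℕ → ℝ → ℂ := fun n x =>
    c n * (((Real.cos ((2 * n + s) * x) : ℝ) : ℂ) + r n x / dd n) with hefdef
  have hef : ∀ n, MemLp (ef n) 2 μπ := by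
    intro n
    refine MemLp.const_mul ?_ (c n)
    have h2 : MemLp (fun x => r n x / dd n) 2 μπ := by
      have := ((hr n).const_mul (dd n)⁻¹)
      refine this.ae_eq (Eventually.of_forall fun x => ?_)
      show (dd n)⁻¹ * r n x = r n x / dd n
      rw [div_eq_inv_mul]
    exact (hcf n).add h2
  -- each summand's Lp element
  have hterm : ∀ n, (hef n).toLp (ef n) = c n • EL n := by
    intro n
    have h1 : c n • EL n = c n • CL n + c n • RL n := by rw [hELdef]; exact smul_add _ _ _
    have h2 : c n • CL n = ((hcf n).const_smul (c n)).toLp _ :=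
      (MemLp.toLp_const_smul _ _).symm
    have h3 : c n • RL n = ((hr n).const_smul (c n * (dd n)⁻¹)).toLp _ := by
      rw [hRLdef]
      simp only [smul_smul]
      exact (MemLp.toLp_const_smul _ _).symm
    rw [h1, h2, h3, ← MemLp.toLp_add]
    refine ((MemLp.toLp_eq_toLp_iff _ _).mpr (Eventually.of_forall fun x => ?_)).symm
    simp only [hefdef, Pi.add_apply, Pi.smul_apply, smul_eq_mul]
    rw [div_eq_mul_inv]
    ring
  -- Lp partial sums
  set T : ℕ → Lp ℂ 2 μπ := fun N => ∑ n ∈ Finset.range N, c n • EL n with hTdef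
  have htoLp : ∀ (F : Finset ℕ) (hsF : MemLp (fun x => ∑ n ∈ F, ef n x) 2 μπ),
      hsF.toLp _ = ∑ n ∈ F, c n • EL n := by
    intro F hsF
    rw [toLp_finset_sum F ef hef hsF]
    exact Finset.sum_congr rfl fun n _ => hterm n
  -- the key uniform estimate
  have hbound : ∀ F : Finset ℕ, ‖∑ n ∈ F, c n • EL n‖
      ≤ K * Real.sqrt (∑ n ∈ F, ‖c n‖ ^ 2) := by
    intro F
    have hsplit : ∑ n ∈ F, c n • EL n = (∑ n ∈ F, c n • CL n) + ∑ n ∈ F, c n • RL n := by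
      rw [← Finset.sum_add_distrib]
      exact Finset.sum_congr rfl fun n _ => by rw [hELdef]; exact smul_add _ _ _
    have hcos : ‖∑ n ∈ F, c n • CL n‖
        ≤ Real.sqrt Real.pi * Real.sqrt (∑ n ∈ F, ‖c n‖ ^ 2) :=
      cos_part_bound s c F hcf
    have hRLn : ∀ n, ‖RL n‖ ^ 2 ≤ ∫ x in Set.Icc (0:ℝ) Real.pi, ‖r n x‖ ^ 2 := by
      intro n
      rw [integral_sq_abs (hr n), hRLdef]
      simp only [norm_smul, norm_inv]
      have h2 := hdd1 n
      have h3 : ‖dd n‖⁻¹ ≤ 1 := by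
        rw [inv_le_one_iff₀]; right; exact h2
      have h4 : 0 ≤ ‖dd n‖⁻¹ := inv_nonneg.mpr (le_trans zero_le_one h2)
      have h5 : ‖dd n‖⁻¹ * ‖(hr n).toLp (r n)‖ ≤ ‖(hr n).toLp (r n)‖ :=
        mul_le_of_le_one_left (norm_nonneg _) h3
      exact pow_le_pow_left₀ (mul_nonneg h4 (norm_nonneg _)) h5 2
    have hsumRL : ∑ n ∈ F, ‖RL n‖ ^ 2 ≤ C₀ := by
      refine le_trans (Finset.sum_le_sum fun n _ => hRLn n) ?_
      refine le_trans (Summable.sum_le_tsum F (fun n _ => integral_nonneg fun x => sq_nonneg _) hrs) hrC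
    have hrem : ‖∑ n ∈ F, c n • RL n‖
        ≤ Real.sqrt (∑ n ∈ F, ‖c n‖ ^ 2) * Real.sqrt C₀ := by
      refine le_trans (norm_sum_le _ _) ?_
      have h1 : ∀ n ∈ F, ‖c n • RL n‖ = ‖c n‖ * ‖RL n‖ := fun n _ => by
        rw [norm_smul]
      rw [Finset.sum_congr rfl h1]
      have hCS := Finset.sum_mul_sq_le_sq_mul_sq F (fun n => ‖c n‖) (fun n => ‖RL n‖)
      have h2 : ∑ n ∈ F, ‖c n‖ * ‖RL n‖
          = Real.sqrt ((∑ n ∈ F, ‖c n‖ * ‖RL n‖) ^ 2) := by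
        rw [Real.sqrt_sq (Finset.sum_nonneg fun n _ =>
          mul_nonneg (norm_nonneg _) (norm_nonneg _))]
      rw [h2]
      refine le_trans (Real.sqrt_le_sqrt hCS) ?_
      rw [Real.sqrt_mul (Finset.sum_nonneg fun n _ => sq_nonneg _)]
      refine mul_le_mul_of_nonneg_left (Real.sqrt_le_sqrt ?_) (Real.sqrt_nonneg _)
      exact hsumRL
    calc ‖∑ n ∈ F, c n • EL n‖ ≤ ‖∑ n ∈ F, c n • CL n‖ + ‖∑ n ∈ F, c n • RL n‖ := by
          rw [hsplit]; exact norm_add_le _ _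
      _ ≤ Real.sqrt Real.pi * Real.sqrt (∑ n ∈ F, ‖c n‖ ^ 2)
            + Real.sqrt (∑ n ∈ F, ‖c n‖ ^ 2) * Real.sqrt C₀ :=
          add_le_add hcos hrem
      _ = K * Real.sqrt (∑ n ∈ F, ‖c n‖ ^ 2) := by rw [hKdef]; ring
  -- partial sums of |c|^2
  set Sc : ℕ → ℝ := fun N => ∑ n ∈ Finset.range N, ‖c n‖ ^ 2 with hScdef
  set Sfull : ℝ := ∑' n, ‖c n‖ ^ 2 with hSfull
  have hScle : ∀ N, Sc N ≤ Sfull := fun N =>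
    Summable.sum_le_tsum _ (fun n _ => sq_nonneg _) hc
  have hScmono : Monotone Sc := by
    intro a b hab
    exact Finset.sum_le_sum_of_subset_of_nonneg
      (Finset.range_subset_range.mpr hab) (fun n _ _ => sq_nonneg _)
  -- Cauchy sequence
  have hcauchy : CauchySeq T := by
    refine cauchySeq_of_le_tendsto_0' (fun N => K * Real.sqrt (Sfull - Sc N)) ?_ ?_
    · intro n m hnm
      rw [dist_eq_norm, norm_sub_rev]
      have h1 : T m - T n = ∑ i ∈ Finset.Ico n m, c i • EL i := by
        rw [hTdef]
        exact (Finset.sum_Ico_eq_sub _ hnm).symm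
      rw [h1]
      refine le_trans (hbound _) (mul_le_mul_of_nonneg_left (Real.sqrt_le_sqrt ?_) hK0.le)
      have h2 : ∑ i ∈ Finset.Ico n m, ‖c i‖ ^ 2 = Sc m - Sc n := by
        rw [hScdef]
        rw [Finset.sum_Ico_eq_sub _ hnm]
      rw [h2]
      have := hScle m
      linarith
    · have h1 : Tendsto Sc atTop (nhds Sfull) := hc.hasSum.tendsto_sum_nat
      have h2 : Tendsto (fun N => Sfull - Sc N) atTop (nhds 0) := by
        have := h1.const_sub Sfull
        simpa using this
      have h3 : Tendsto (fun N => Real.sqrt (Sfull - Sc N)) atTop (nhds 0) := by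
        have := (Real.continuous_sqrt.tendsto 0).comp h2
        simpa [Function.comp_def] using this
      have := h3.const_mul K
      simpa using this
  obtain ⟨gL, hgL⟩ := cauchySeq_tendsto_of_complete hcauchy
  refine ⟨⇑gL, Lp.memLp gL, ?_, ?_⟩
  · -- convergence of the integrals
    have key : ∀ N, (∫ x in Set.Icc (0:ℝ) Real.pi,
        ‖(∑ n ∈ Finset.range N, ef n x) - gL x‖ ^ 2) = ‖T N - gL‖ ^ 2 := by
      intro N
      have hSN : MemLp (fun x => ∑ n ∈ Finset.range N, ef n x) 2 μπ :=
        memLp_finset_sum _ fun n _ => hef n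
      have hm : MemLp (fun x => (∑ n ∈ Finset.range N, ef n x) - gL x) 2 μπ :=
        hSN.sub (Lp.memLp gL)
      rw [integral_sq_abs hm]
      congr 1
      have h1 : hm.toLp _ = hSN.toLp _ - (Lp.memLp gL).toLp _ := by
        rw [← MemLp.toLp_sub]
        rfl
      rw [h1, htoLp (Finset.range N) hSN, MeasureTheory.Lp.toLp_coeFn gL (Lp.memLp gL)]
    have hTn : Tendsto (fun N => ‖T N - gL‖ ^ 2) atTop (nhds 0) := by
      have h1 : Tendsto (fun N => ‖T N - gL‖) atTop (nhds 0) :=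
        tendsto_iff_norm_sub_tendsto_zero.mp hgL
      have := h1.pow 2
      simpa using this
    refine hTn.congr fun N => ?_
    exact (key N).symm
  · -- the norm bound
    have h1 : (∫ x in Set.Icc (0:ℝ) Real.pi, ‖gL x‖ ^ 2) = ‖gL‖ ^ 2 := by
      rw [integral_sq_abs (Lp.memLp gL), MeasureTheory.Lp.toLp_coeFn gL (Lp.memLp gL)]
    rw [h1]
    have h2 : Tendsto (fun N => ‖T N‖) atTop (nhds ‖gL‖) := hgL.norm
    have h3 : ‖gL‖ ≤ K * Real.sqrt Sfull := by
      refine le_of_tendsto h2 (Eventually.of_forall fun N => ?_)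
      refine le_trans (hbound _) (mul_le_mul_of_nonneg_left ?_ hK0.le)
      exact Real.sqrt_le_sqrt (hScle N)
    have h4 : 0 ≤ Sfull := tsum_nonneg fun n => sq_nonneg _
    have h5 : ‖gL‖ ^ 2 ≤ (K * Real.sqrt Sfull) ^ 2 :=
      pow_le_pow_left₀ (norm_nonneg _) h3 2
    calc ‖gL‖ ^ 2 ≤ (K * Real.sqrt Sfull) ^ 2 := h5
      _ = K ^ 2 * Sfull := by rw [mul_pow, Real.sq_sqrt h4]
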